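/- Let q ∈ (0,1) and ν > -1 with 4(1-q)(1-q^ν) > q^ν. Then the coefficients K_n of the normalized Jackson second q-Bessel function satisfy Σ_{n≥1} (n+1)|K_n| ≤ (8(1-q)(1-q^ν)q^ν - q^{2ν}) / (4(1-q)(1-q^ν) - q^ν)^2; equivalently, ((4(1-q)(1-q^ν) - q^ν)^2 / (8(1-q)(1-q^ν)q^ν - q^{2ν})) · Σ_{n≥1} (n+1)|K_n| ≤ 1. -/

import Mathlib

open Complex

/-- q-Pochhammer symbol (a;q)_n = ∏_{k=1}^n (1 - a q^{k-1}). -/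
noncomputable def qPoch (a q : ℝ) (n : ℕ) : ℝ :=
  ∏ k ∈ Finset.range n, (1 - a * q ^ k)

/-- Coefficients of the normalized Jackson second q-Bessel function. -/
noncomputable def K (q ν : ℝ) (n : ℕ) : ℝ :=
  (-1) ^ n * q ^ ((n : ℝ) * ((n : ℝ) + ν)) /
    (4 ^ n * qPoch q q n * qPoch (q ^ (ν + 1)) q n)

/-- Normalized Jackson second q-Bessel function h_ν^{(2)}(z;q). -/
noncomputable def h2 (q ν : ℝ) (z : ℂ) : ℂ :=
  ∑' n : ℕ, (K q ν n : ℂ) * z ^ (n + 1)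

/-- Derivative of the normalized Jackson second q-Bessel function. -/
noncomputable def h2' (q ν : ℝ) (z : ℂ) : ℂ :=
  ∑' n : ℕ, ((n : ℂ) + 1) * (K q ν n : ℂ) * z ^ n

/-- m-th partial sum of h_ν^{(2)}(z;q). -/
noncomputable def h2p (q ν : ℝ) (m : ℕ) (z : ℂ) : ℂ :=
  z + ∑ n ∈ Finset.Icc 1 m, (K q ν n : ℂ) * z ^ (n + 1)

/-- Derivative of the m-th partial sum of h_ν^{(2)}(z;q). -/
noncomputable def h2p' (q ν : ℝ) (m : ℕ) (z : ℂ) : ℂ :=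
  1 + ∑ n ∈ Finset.Icc 1 m, ((n : ℂ) + 1) * (K q ν n : ℂ) * z ^ n

theorem stmt13 (q ν : ℝ) (hq : q ∈ Set.Ioo (0 : ℝ) 1) (hν : -1 < ν)
    (hc : 4 * (1 - q) * (1 - q ^ ν) > q ^ ν) :
    ∑' n : ℕ, ((n : ℝ) + 2) * |K q ν (n + 1)| ≤
      (8 * (1 - q) * (1 - q ^ ν) * q ^ ν - q ^ (2 * ν)) / (4 * (1 - q) * (1 - q ^ ν) - q ^ ν) ^ 2 := by
  obtain ⟨hq0, hq1⟩ := hq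
  have hqν : (0:ℝ) < q ^ ν := Real.rpow_pos_of_pos hq0 ν
  have h1q : (0:ℝ) < 1 - q := by linarith
  have h1qν : (0:ℝ) < 1 - q ^ ν := by nlinarith
  set A : ℝ := 4 * (1 - q) * (1 - q ^ ν) with hA
  have hA0 : (0:ℝ) < A := by positivity
  set r : ℝ := q ^ ν / A with hrdef
  have hr0 : (0:ℝ) < r := by positivity
  have hr1 : r < 1 := (div_lt_one hA0).mpr hc
  -- lower bounds for the Pochhammer products
  have hP1 : ∀ n : ℕ, (1 - q) ^ n ≤ qPoch q q n := by
    intro n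
    unfold qPoch
    have hc' : (1 - q) ^ n = ∏ _k ∈ Finset.range n, (1 - q) := by
      rw [Finset.prod_const, Finset.card_range]
    rw [hc']
    refine Finset.prod_le_prod (fun k _ => h1q.le) (fun k _ => ?_)
    have hk : q ^ k ≤ 1 := pow_le_one₀ hq0.le hq1.le
    nlinarith
  have hP2 : ∀ n : ℕ, (1 - q ^ ν) ^ n ≤ qPoch (q ^ (ν + 1)) q n := by
    intro n
    unfold qPoch
    have hc' : (1 - q ^ ν) ^ n = ∏ _k ∈ Finset.range n, (1 - q ^ ν) := by
      rw [Finset.prod_const, Finset.card_range]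
    rw [hc']
    refine Finset.prod_le_prod (fun k _ => h1qν.le) (fun k _ => ?_)
    have hE : q ^ (ν + 1) * q ^ k = q ^ (ν + 1 + (k : ℝ)) := by
      rw [← Real.rpow_natCast q k, ← Real.rpow_add hq0]
    have hle : q ^ (ν + 1 + (k : ℝ)) ≤ q ^ ν := by
      apply Real.rpow_le_rpow_of_exponent_ge hq0 hq1.le
      have : (0:ℝ) ≤ (k:ℝ) := Nat.cast_nonneg k
      linarith
    rw [hE]; linarith
  have hP1pos : ∀ n : ℕ, (0:ℝ) < qPoch q q n := fun n =>
    lt_of_lt_of_le (pow_pos h1q n) (hP1 n)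
  have hP2pos : ∀ n : ℕ, (0:ℝ) < qPoch (q ^ (ν + 1)) q n := fun n =>
    lt_of_lt_of_le (pow_pos h1qν n) (hP2 n)
  -- key bound on |K n|
  have key : ∀ n : ℕ, |K q ν n| ≤ r ^ n := by
    intro n
    have hD : (0:ℝ) < 4 ^ n * qPoch q q n * qPoch (q ^ (ν + 1)) q n := by
      have := hP1pos n; have := hP2pos n; positivity
    have habs : |K q ν n| =
        q ^ ((n : ℝ) * ((n : ℝ) + ν)) /
          (4 ^ n * qPoch q q n * qPoch (q ^ (ν + 1)) q n) := by
      unfold K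
      rw [abs_div, abs_mul, _root_.abs_pow, abs_neg, abs_one, one_pow, one_mul,
        abs_of_pos (Real.rpow_pos_of_pos hq0 _), abs_of_pos hD]
    rw [habs]
    have hnum : q ^ ((n : ℝ) * ((n : ℝ) + ν)) ≤ (q ^ ν) ^ n := by
      have : (n : ℝ) * ((n : ℝ) + ν) = (n : ℝ) * (n : ℝ) + ν * (n : ℝ) := by ring
      rw [this, Real.rpow_add hq0]
      have h1 : q ^ ((n:ℝ) * (n:ℝ)) ≤ 1 :=
        Real.rpow_le_one hq0.le hq1.le (by positivity)
      have h2 : q ^ (ν * (n:ℝ)) = (q ^ ν) ^ n := by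
        rw [Real.rpow_mul hq0.le, Real.rpow_natCast]
      nlinarith [Real.rpow_pos_of_pos hq0 (ν * (n:ℝ))]
    have hden : A ^ n ≤ 4 ^ n * qPoch q q n * qPoch (q ^ (ν + 1)) q n := by
      have hAe : A ^ n = 4 ^ n * (1 - q) ^ n * (1 - q ^ ν) ^ n := by
        rw [hA, mul_pow, mul_pow]
      rw [hAe]
      have h4 : (0:ℝ) ≤ 4 ^ n := by positivity
      calc 4 ^ n * (1 - q) ^ n * (1 - q ^ ν) ^ n
          ≤ 4 ^ n * qPoch q q n * (1 - q ^ ν) ^ n := by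
            refine mul_le_mul_of_nonneg_right ?_ (pow_pos h1qν n).le
            exact mul_le_mul_of_nonneg_left (hP1 n) h4
        _ ≤ 4 ^ n * qPoch q q n * qPoch (q ^ (ν + 1)) q n := by
            refine mul_le_mul_of_nonneg_left (hP2 n) ?_
            exact mul_nonneg h4 (hP1pos n).le
    have : r ^ n = (q ^ ν) ^ n / A ^ n := by
      rw [hrdef, div_pow]
    rw [this]
    exact div_le_div₀ (by positivity) hnum (pow_pos hA0 n) hden
  -- summability of the geometric majorant
  have hrabs : ‖r‖ < 1 := by rw [Real.norm_eq_abs, abs_of_pos hr0]; exact hr1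
  have hsum_geom : Summable (fun n : ℕ => r ^ n) := summable_geometric_of_lt_one hr0.le hr1
  have hsum_n : Summable (fun n : ℕ => (n:ℝ) * r ^ n) := by
    have := summable_pow_mul_geometric_of_norm_lt_one 1 hrabs (R := ℝ)
    simpa using this
  have hg : Summable (fun n : ℕ => ((n:ℝ) + 2) * r ^ (n + 1)) := by
    have : (fun n : ℕ => ((n:ℝ) + 2) * r ^ (n + 1)) =
        (fun n : ℕ => ((n:ℝ) * r ^ n) * r + 2 * (r ^ n * r)) := by
      funext n; rw [pow_succ]; ring
    rw [this]
    exact (hsum_n.mul_right r).add (((hsum_geom.mul_right r)).mul_left 2)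
  -- term-wise bound
  have hterm : ∀ n : ℕ, ((n:ℝ) + 2) * |K q ν (n + 1)| ≤ ((n:ℝ) + 2) * r ^ (n + 1) := by
    intro n
    exact mul_le_mul_of_nonneg_left (key (n + 1)) (by positivity)
  have hLsum : Summable (fun n : ℕ => ((n:ℝ) + 2) * |K q ν (n + 1)|) := by
    refine Summable.of_nonneg_of_le (fun n => by positivity) hterm hg
  have h1 : ∑' n : ℕ, ((n:ℝ) + 2) * |K q ν (n + 1)| ≤
      ∑' n : ℕ, ((n:ℝ) + 2) * r ^ (n + 1) := Summable.tsum_le_tsum hterm hLsum hg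
  refine h1.trans_eq ?_
  -- compute the geometric sum
  have hgeo : ∑' n : ℕ, r ^ n = (1 - r)⁻¹ := tsum_geometric_of_lt_one hr0.le hr1
  have hng : ∑' n : ℕ, (n:ℝ) * r ^ n = r / (1 - r) ^ 2 :=
    tsum_coe_mul_geometric_of_norm_lt_one hrabs
  have hsplit : ∑' n : ℕ, ((n:ℝ) + 2) * r ^ (n + 1) =
      (∑' n : ℕ, (n:ℝ) * r ^ n) * r + 2 * ((∑' n : ℕ, r ^ n) * r) := by
    rw [← tsum_mul_right, ← tsum_mul_right, ← tsum_mul_left,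
      ← Summable.tsum_add (hsum_n.mul_right r) ((hsum_geom.mul_right r).mul_left 2)]
    congr 1; funext n; rw [pow_succ]; ring
  rw [hsplit, hng, hgeo]
  have h2ν : q ^ (2 * ν) = (q ^ ν) ^ 2 := by
    rw [mul_comm, Real.rpow_mul hq0.le, Real.rpow_two]
  have hAq : A - q ^ ν ≠ 0 := by linarith [hc]
  have h1r : (1 : ℝ) - r = (A - q ^ ν) / A := by
    field_simp [hrdef]
    rw [hrdef, sub_mul, div_mul_cancel₀ _ hA0.ne', one_mul]
  rw [h2ν, h1r, hrdef]
  rw [hA]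
  field_simp
  ring
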